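/- Let n ≥ 2, m ≥ n, k ≥ 1 an integer, and ρ ∈ (0,1]. For each agent i, let T_i ⊆ G with |T_i| = n−1 be a set of top goods of agent i (i.e., v_i(g) ≥ v_i(g') for every g ∈ T_i and g' ∉ T_i), and let t_i = min_{g ∈ T_i} v_i(g). Suppose that for each agent i a nonnegative function ṽ_i : G → ℝ satisfies: (i) ṽ_i(g) ≤ v_i(g) for every g ∈ G; (ii) ṽ_i(g) = v_i(g) for every g ∈ T_i; (iii) for every g ∈ G, if ṽ_i(g) > 0 then v_i(g) ≤ m^{1/(k+1)} · ṽ_i(g); and (iv) for every g ∈ G, if ṽ_i(g) = 0 then v_i(g) ≤ t_i · m^{−k/(k+1)}. If an allocation X is ρ-EFX with respect to the additive valuations (ṽ_1,…,ṽ_n), then X is (ρ/(2·m^{1/(k+1)}))-EFX with respect to (v_1,…,v_n). -/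

import Mathlib

/-- If virtual valuations `vt` satisfy the four stated approximation
conditions relative to the true valuations `v` (with top sets `T i` of size `n-1` and
`t i` the minimum top value), then any allocation that is `ρ`-EFX with respect to `vt`
is `(ρ/(2·m^(1/(k+1))))`-EFX with respect to `v`. -/
theorem stmt_3 (n m k : ℕ) (hn : 2 ≤ n) (hm : n ≤ m) (hk : 1 ≤ k)
    (ρ : ℝ) (hρ0 : 0 < ρ) (hρ1 : ρ ≤ 1)
    (v vt : Fin n → Fin m → ℝ)
    (hv : ∀ i g, 0 ≤ v i g) (hvt : ∀ i g, 0 ≤ vt i g)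
    (T : Fin n → Finset (Fin m))
    (hTcard : ∀ i, (T i).card = n - 1)
    (hTtop : ∀ i : Fin n, ∀ g ∈ T i, ∀ g' ∉ T i, v i g' ≤ v i g)
    (t : Fin n → ℝ)
    (htmem : ∀ i, ∃ g ∈ T i, v i g = t i)
    (htmin : ∀ i : Fin n, ∀ g ∈ T i, t i ≤ v i g)
    (h1 : ∀ i g, vt i g ≤ v i g)
    (h2 : ∀ i : Fin n, ∀ g ∈ T i, vt i g = v i g)
    (h3 : ∀ i g, 0 < vt i g → v i g ≤ (m : ℝ) ^ ((1 : ℝ) / ((k : ℝ) + 1)) * vt i g)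
    (h4 : ∀ i g, vt i g = 0 → v i g ≤ t i * (m : ℝ) ^ (-(k : ℝ) / ((k : ℝ) + 1)))
    (X : Fin n → Finset (Fin m))
    (hdisj : ∀ i j : Fin n, i ≠ j → Disjoint (X i) (X j))
    (hcover : ∀ g : Fin m, ∃ i : Fin n, g ∈ X i)
    (hEFX : ∀ i j : Fin n, X j ≠ ∅ → ∀ g ∈ X j,
      ρ * ((X j).erase g).sum (vt i) ≤ (X i).sum (vt i)) :
    ∀ i j : Fin n, X j ≠ ∅ → ∀ g ∈ X j,
      (ρ / (2 * (m : ℝ) ^ ((1 : ℝ) / ((k : ℝ) + 1)))) * ((X j).erase g).sum (v i)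
        ≤ (X i).sum (v i) := by
  classical
  intro i j hjne g hg
  set β : ℝ := (m : ℝ) ^ ((1 : ℝ) / ((k : ℝ) + 1)) with hβdef
  set μ : ℝ := (m : ℝ) ^ (-(k : ℝ) / ((k : ℝ) + 1)) with hμdef
  have hm1 : (1:ℝ) ≤ (m:ℝ) := by
    have : 1 ≤ m := le_trans (le_trans one_le_two hn) hm
    exact_mod_cast this
  have hm0 : (0:ℝ) < (m:ℝ) := lt_of_lt_of_le one_pos hm1
  have hβ1 : 1 ≤ β := Real.one_le_rpow hm1 (by positivity)
  have hβ0 : (0:ℝ) < β := lt_of_lt_of_le one_pos hβ1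
  have hμ0 : (0:ℝ) ≤ μ := Real.rpow_nonneg (le_of_lt hm0) _
  have hti0 : 0 ≤ t i := by
    obtain ⟨g', hg', hv'⟩ := htmem i
    rw [← hv']; exact hv i g'
  have hmul : (m:ℝ) * μ = β := by
    have h := (Real.rpow_add hm0 1 (-(k:ℝ)/((k:ℝ)+1))).symm
    rw [Real.rpow_one] at h
    rw [hμdef, h, hβdef]
    congr 1
    have hk1 : ((k:ℝ)+1) ≠ 0 := by positivity
    field_simp
    ring
  have hA0 : 0 ≤ (X i).sum (v i) := Finset.sum_nonneg (fun h _ => hv i h)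
  have hAtA : (X i).sum (vt i) ≤ (X i).sum (v i) :=
    Finset.sum_le_sum (fun x _ => h1 i x)
  by_cases hcase : ρ * t i ≤ (X i).sum (v i)
  · -- Case A
    have hEF := hEFX i j hjne g hg
    have hpt : ∀ h ∈ (X j).erase g, v i h ≤ β * vt i h + t i * μ := by
      intro h _
      rcases lt_or_eq_of_le (hvt i h) with hpos | hzero
      · have h3' := h3 i h hpos
        nlinarith [mul_nonneg hti0 hμ0]
      · have h4' := h4 i h hzero.symm
        rw [← hzero]
        nlinarith
    have hS : ((X j).erase g).sum (v i)
        ≤ β * ((X j).erase g).sum (vt i) + ((X j).erase g).card * (t i * μ) := by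
      calc ((X j).erase g).sum (v i)
          ≤ ((X j).erase g).sum (fun h => β * vt i h + t i * μ) := Finset.sum_le_sum hpt
        _ = β * ((X j).erase g).sum (vt i) + ((X j).erase g).card * (t i * μ) := by
            rw [Finset.sum_add_distrib, Finset.mul_sum, Finset.sum_const, nsmul_eq_mul]
    have hcard : (((X j).erase g).card : ℝ) ≤ (m : ℝ) := by
      have : ((X j).erase g).card ≤ m := by simpa using Finset.card_le_univ ((X j).erase g)
      exact_mod_cast this
    have hS2 : ((X j).erase g).sum (v i)
        ≤ β * ((X j).erase g).sum (vt i) + β * t i := by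
      have : (((X j).erase g).card : ℝ) * (t i * μ) ≤ (m:ℝ) * (t i * μ) :=
        mul_le_mul_of_nonneg_right hcard (mul_nonneg hti0 hμ0)
      have hmm : (m:ℝ) * (t i * μ) = β * t i := by
        rw [show (m:ℝ) * (t i * μ) = ((m:ℝ) * μ) * t i by ring, hmul]
      linarith [hS]
    rw [div_mul_eq_mul_div, div_le_iff₀ (by positivity)]
    nlinarith [mul_le_mul_of_nonneg_left hS2 hρ0.le,
      mul_le_mul_of_nonneg_left hEF hβ0.le,
      mul_le_mul_of_nonneg_left hcase hβ0.le,
      mul_le_mul_of_nonneg_left hAtA hβ0.le]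
  · -- Case B
    push_neg at hcase
    by_cases hij : j = i
    · subst hij
      have hsub : ((X j).erase g).sum (v j) ≤ (X j).sum (v j) :=
        Finset.sum_le_sum_of_subset_of_nonneg (Finset.erase_subset _ _)
          (fun h _ _ => hv j h)
      have hS0 : 0 ≤ ((X j).erase g).sum (v j) :=
        Finset.sum_nonneg (fun h _ => hv j h)
      have hc : ρ / (2*β) ≤ 1 := by
        rw [div_le_one (by positivity)]; linarith
      nlinarith [mul_le_mul_of_nonneg_right hc hS0]
    · have hti : 0 < t i := by
        by_contra hcon
        push_neg at hcon
        have : t i = 0 := le_antisymm hcon hti0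
        rw [this] at hcase
        nlinarith
      choose φ hφmem using hcover
      have hnotin : ∀ g' ∈ T i, φ g' ≠ i := by
        intro g' hg' heq
        have hmem : g' ∈ X i := heq ▸ hφmem g'
        have : t i ≤ (X i).sum (v i) :=
          le_trans (htmin i g' hg') (Finset.single_le_sum (fun h _ => hv i h) hmem)
        nlinarith
      have hsing : ∀ g' ∈ T i, X (φ g') = {g'} := by
        intro g' hg'
        apply Finset.eq_singleton_iff_unique_mem.mpr
        refine ⟨hφmem g', ?_⟩
        intro h hh
        by_contra hne
        have hg'mem : g' ∈ (X (φ g')).erase h :=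
          Finset.mem_erase.mpr ⟨fun e => hne e.symm, hφmem g'⟩
        have hEF2 := hEFX i (φ g') (Finset.ne_empty_of_mem hh) h hh
        have hlow : t i ≤ ((X (φ g')).erase h).sum (vt i) := by
          have h2' : vt i g' = v i g' := h2 i g' hg'
          have hsl := Finset.single_le_sum (fun x _ => hvt i x) hg'mem
          have := htmin i g' hg'
          linarith
        nlinarith [mul_le_mul_of_nonneg_left hlow hρ0.le]
      have hinj : Set.InjOn φ (T i) := by
        intro a ha b hb hab
        have : a ∈ X (φ b) := hab ▸ hφmem a
        rw [hsing b hb] at this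
        exact Finset.mem_singleton.mp this
      have himage : (T i).image φ = Finset.univ.erase i := by
        apply Finset.eq_of_subset_of_card_le
        · intro l hl
          obtain ⟨g', hg', rfl⟩ := Finset.mem_image.mp hl
          exact Finset.mem_erase.mpr ⟨hnotin g' hg', Finset.mem_univ _⟩
        · rw [Finset.card_erase_of_mem (Finset.mem_univ i), Finset.card_univ,
            Fintype.card_fin, Finset.card_image_of_injOn hinj, hTcard]
      have hjmem : j ∈ (T i).image φ := by
        rw [himage]; exact Finset.mem_erase.mpr ⟨hij, Finset.mem_univ _⟩
      obtain ⟨g', hg', hgj⟩ := Finset.mem_image.mp hjmem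
      have hXj : X j = {g'} := hgj ▸ hsing g' hg'
      have hgg' : g = g' := by
        rw [hXj] at hg; exact Finset.mem_singleton.mp hg
      rw [hXj, hgg', Finset.erase_singleton, Finset.sum_empty, mul_zero]
      exact hA0
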